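/- Let {P_t}_{t∈T} be a Markov semigroup on a Polish space (X, ρ) with T = ℕ₊ which is Feller and asymptotically stable with unique invariant measure μ*. If Int(supp μ*) ≠ ∅, then {P_t} satisfies the e-property at every point of X. -/

import Mathlib

open MeasureTheory Filter Topology Metric ENNReal
open scoped Classical

noncomputable section

variable {X : Type*}

/-- A bounded Lipschitz real-valued function. -/
def BddLip [PseudoMetricSpace X] (f : X → ℝ) : Prop :=
  (∃ K, LipschitzWith K f) ∧ ∃ C, ∀ x, |f x| ≤ C

/-- The topological support of a Borel measure:
`{x : μ(B(x,ε)) > 0 for every ε > 0}`. -/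
def msupp [PseudoMetricSpace X] [MeasurableSpace X] (μ : Measure X) : Set X :=
  {x | ∀ ε > 0, 0 < μ (Metric.ball x ε)}

/-! ### Discrete time `T = ℕ₊` -/

/-- Action of a transition kernel family on bounded Borel functions:
`P_n f (x) = ∫ f(y) P_n(x,dy)`. -/
def PfN [MeasurableSpace X] (P : ℕ → X → Measure X) (n : ℕ) (f : X → ℝ) (x : X) : ℝ :=
  ∫ y, f y ∂ P n x

/-- A Markov semigroup indexed by `T = ℕ₊ = {1,2,...}`. -/
def IsMarkovSemigroupN [MeasurableSpace X] (P : ℕ → X → Measure X) : Prop :=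
  (∀ n x, 1 ≤ n → IsProbabilityMeasure (P n x)) ∧
  (∀ (n : ℕ) (A : Set X), 1 ≤ n → MeasurableSet A → Measurable fun x => P n x A) ∧
  ∀ (m n : ℕ) (x : X) (A : Set X), 1 ≤ m → 1 ≤ n → MeasurableSet A →
    P (m + n) x A = ∫⁻ y, P n y A ∂ P m x

/-- The Feller property: each `P_n` maps bounded continuous functions to
bounded continuous functions. -/
def FellerN [MeasurableSpace X] [PseudoMetricSpace X] (P : ℕ → X → Measure X) : Prop :=
  ∀ n, 1 ≤ n → ∀ f : X → ℝ, Continuous f → (∃ C, ∀ x, |f x| ≤ C) →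
    Continuous (fun x => PfN P n f x) ∧ ∃ C, ∀ x, |PfN P n f x| ≤ C

/-- The e-property at a point `z`. -/
def EPropN [MeasurableSpace X] [PseudoMetricSpace X] (P : ℕ → X → Measure X) (z : X) : Prop :=
  ∀ f : X → ℝ, BddLip f → ∀ ε > 0, ∃ δ > 0, ∀ x, dist x z < δ → ∀ n, 1 ≤ n →
    |PfN P n f x - PfN P n f z| < ε

/-- The eventual e-property at a point `z`. -/
def EventualEPropN [MeasurableSpace X] [PseudoMetricSpace X] (P : ℕ → X → Measure X)
    (z : X) : Prop :=
  ∀ f : X → ℝ, BddLip f → ∀ ε > 0, ∃ δ > 0, ∃ n₀ : ℕ, 1 ≤ n₀ ∧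
    ∀ x, dist x z < δ → ∀ n, n₀ ≤ n → |PfN P n f x - PfN P n f z| < ε

/-- Eventual continuity (asymptotic equicontinuity) at a point `z`. -/
def EvContN [MeasurableSpace X] [PseudoMetricSpace X] (P : ℕ → X → Measure X) (z : X) : Prop :=
  ∀ f : X → ℝ, BddLip f → ∀ ε > 0, ∃ δ > 0, ∀ x, dist x z < δ →
    Filter.limsup (fun n => |PfN P n f x - PfN P n f z|) Filter.atTop ≤ ε

/-- Invariance of a measure: `P_n μ = μ` for all `n ∈ ℕ₊`. -/
def InvariantN [MeasurableSpace X] (P : ℕ → X → Measure X) (μ : Measure X) : Prop :=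
  ∀ n, 1 ≤ n → μ.bind (P n) = μ

/-- `μ` is an ergodic invariant measure: it is invariant and every Borel set `A`
with `P_n 1_A = 1_A` μ-a.e. for all `n` has `μ(A) ∈ {0,1}`. -/
def ErgodicMeasN [MeasurableSpace X] (P : ℕ → X → Measure X) (μ : Measure X) : Prop :=
  InvariantN P μ ∧
  ∀ A : Set X, MeasurableSet A →
    (∀ n, 1 ≤ n → ∀ᵐ x ∂μ, P n x A = A.indicator (fun _ => (1 : ℝ≥0∞)) x) →
    μ A = 0 ∨ μ A = 1

/-- Cesàro averages acting on functions: `Q_n f(x) = (1/n) ∑_{k=1}^n P_k f(x)`. -/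
def QfN [MeasurableSpace X] (P : ℕ → X → Measure X) (n : ℕ) (f : X → ℝ) (x : X) : ℝ :=
  (1 / (n : ℝ)) * ∑ k ∈ Finset.Icc 1 n, PfN P k f x

/-- Cesàro averages on sets: `Q_n(x,A) = (1/n) ∑_{k=1}^n P_k(x,A)`. -/
def QsetN [MeasurableSpace X] (P : ℕ → X → Measure X) (n : ℕ) (x : X) (A : Set X) : ℝ≥0∞ :=
  (n : ℝ≥0∞)⁻¹ * ∑ k ∈ Finset.Icc 1 n, P k x A

/-- Asymptotic stability with unique invariant measure `μs`. -/
def AsympStableN [MeasurableSpace X] [PseudoMetricSpace X] (P : ℕ → X → Measure X)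
    (μs : Measure X) : Prop :=
  IsProbabilityMeasure μs ∧ InvariantN P μs ∧
  (∀ ν : Measure X, IsProbabilityMeasure ν → InvariantN P ν → ν = μs) ∧
  ∀ ν : Measure X, IsProbabilityMeasure ν → ∀ f : X → ℝ, Continuous f →
    (∃ C, ∀ x, |f x| ≤ C) →
    Tendsto (fun n => ∫ y, f y ∂ (ν.bind (P n))) atTop (𝓝 (∫ y, f y ∂ μs))

/-! ### Continuous time `T = [0,∞)` -/

/-- Action on bounded Borel functions, continuous time. -/
def PfR [MeasurableSpace X] (P : ℝ → X → Measure X) (t : ℝ) (f : X → ℝ) (x : X) : ℝ :=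
  ∫ y, f y ∂ P t x

/-- A Markov semigroup indexed by `T = [0,∞)`, with `P_0(x,·) = δ_x`. -/
def IsMarkovSemigroupR [MeasurableSpace X] (P : ℝ → X → Measure X) : Prop :=
  (∀ t x, 0 ≤ t → IsProbabilityMeasure (P t x)) ∧
  (∀ (t : ℝ) (A : Set X), 0 ≤ t → MeasurableSet A → Measurable fun x => P t x A) ∧
  (∀ x, P 0 x = Measure.dirac x) ∧
  ∀ (s t : ℝ) (x : X) (A : Set X), 0 ≤ s → 0 ≤ t → MeasurableSet A →
    P (s + t) x A = ∫⁻ y, P t y A ∂ P s x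

/-- Joint time-measurability: `s ↦ P_s(x,A)` is Borel measurable. -/
def TimeMeasR [MeasurableSpace X] (P : ℝ → X → Measure X) : Prop :=
  ∀ (x : X) (A : Set X), MeasurableSet A → Measurable fun s : ℝ => P s x A

/-- The Feller property, continuous time. -/
def FellerR [MeasurableSpace X] [PseudoMetricSpace X] (P : ℝ → X → Measure X) : Prop :=
  ∀ t : ℝ, 0 ≤ t → ∀ f : X → ℝ, Continuous f → (∃ C, ∀ x, |f x| ≤ C) →
    Continuous (fun x => PfR P t f x) ∧ ∃ C, ∀ x, |PfR P t f x| ≤ C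

/-- Strong continuity on `C_b(X)`: `sup_x |P_t f(x) - f(x)| → 0` as `t ↓ 0`. -/
def StrongContR [MeasurableSpace X] [PseudoMetricSpace X] (P : ℝ → X → Measure X) : Prop :=
  ∀ f : X → ℝ, Continuous f → (∃ C, ∀ x, |f x| ≤ C) →
    ∀ ε > 0, ∃ η > 0, ∀ t : ℝ, 0 < t → t < η → ∀ x, |PfR P t f x - f x| < ε

/-- The e-property at a point `z`, continuous time. -/
def EPropR [MeasurableSpace X] [PseudoMetricSpace X] (P : ℝ → X → Measure X) (z : X) : Prop :=
  ∀ f : X → ℝ, BddLip f → ∀ ε > 0, ∃ δ > 0, ∀ x, dist x z < δ → ∀ t : ℝ, 0 ≤ t →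
    |PfR P t f x - PfR P t f z| < ε

/-- The eventual e-property at a point `z`, continuous time. -/
def EventualEPropR [MeasurableSpace X] [PseudoMetricSpace X] (P : ℝ → X → Measure X)
    (z : X) : Prop :=
  ∀ f : X → ℝ, BddLip f → ∀ ε > 0, ∃ δ > 0, ∃ t₀ : ℝ, 0 ≤ t₀ ∧
    ∀ x, dist x z < δ → ∀ t : ℝ, t₀ ≤ t → |PfR P t f x - PfR P t f z| < ε

/-- Eventual continuity at `z`, continuous time. -/
def EvContR [MeasurableSpace X] [PseudoMetricSpace X] (P : ℝ → X → Measure X) (z : X) : Prop :=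
  ∀ f : X → ℝ, BddLip f → ∀ ε > 0, ∃ δ > 0, ∀ x, dist x z < δ →
    Filter.limsup (fun t : ℝ => |PfR P t f x - PfR P t f z|) Filter.atTop ≤ ε

/-- Invariance, continuous time. -/
def InvariantR [MeasurableSpace X] (P : ℝ → X → Measure X) (μ : Measure X) : Prop :=
  ∀ t : ℝ, 0 ≤ t → μ.bind (P t) = μ

/-- Ergodic invariant measure, continuous time. -/
def ErgodicMeasR [MeasurableSpace X] (P : ℝ → X → Measure X) (μ : Measure X) : Prop :=
  InvariantR P μ ∧
  ∀ A : Set X, MeasurableSet A →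
    (∀ t : ℝ, 0 ≤ t → ∀ᵐ x ∂μ, P t x A = A.indicator (fun _ => (1 : ℝ≥0∞)) x) →
    μ A = 0 ∨ μ A = 1

/-- Cesàro averages acting on functions: `Q_t f(x) = (1/t) ∫_0^t P_s f(x) ds`. -/
def QfR [MeasurableSpace X] (P : ℝ → X → Measure X) (t : ℝ) (f : X → ℝ) (x : X) : ℝ :=
  (1 / t) * ∫ s in Set.Ioc (0 : ℝ) t, PfR P s f x

/-- Cesàro averages on sets: `Q_t(x,A) = (1/t) ∫_0^t P_s(x,A) ds`. -/
def QsetR [MeasurableSpace X] (P : ℝ → X → Measure X) (t : ℝ) (x : X) (A : Set X) : ℝ≥0∞ :=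
  ENNReal.ofReal (1 / t) * ∫⁻ s in Set.Ioc (0 : ℝ) t, P s x A

/-- Asymptotic stability, continuous time. -/
def AsympStableR [MeasurableSpace X] [PseudoMetricSpace X] (P : ℝ → X → Measure X)
    (μs : Measure X) : Prop :=
  IsProbabilityMeasure μs ∧ InvariantR P μs ∧
  (∀ ν : Measure X, IsProbabilityMeasure ν → InvariantR P ν → ν = μs) ∧
  ∀ ν : Measure X, IsProbabilityMeasure ν → ∀ f : X → ℝ, Continuous f →
    (∃ C, ∀ x, |f x| ≤ C) →
    Tendsto (fun t : ℝ => ∫ y, f y ∂ (ν.bind (P t))) atTop (𝓝 (∫ y, f y ∂ μs))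

end
noncomputable section

namespace EPropAux

variable {X : Type*} [MetricSpace X] [MeasurableSpace X] [BorelSpace X]

/-- bounded measurable functions are integrable against finite measures -/
lemma integrable_of_bound (μ : Measure X) [IsFiniteMeasure μ] (f : X → ℝ)
    (hf : AEStronglyMeasurable f μ) (C : ℝ) (h : ∀ y, |f y| ≤ C) : Integrable f μ :=
  (integrable_const C).mono' hf (Filter.Eventually.of_forall (by simpa [Real.norm_eq_abs] using h))

lemma abs_integral_le (μ : Measure X) (hμ : μ Set.univ ≤ 1) (f : X → ℝ)
    (C : ℝ) (h : ∀ y, |f y| ≤ C) (hC : 0 ≤ C) : |∫ y, f y ∂μ| ≤ C := by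
  haveI : IsFiniteMeasure μ := ⟨lt_of_le_of_lt hμ ENNReal.one_lt_top⟩
  rw [← Real.norm_eq_abs]
  calc ‖∫ y, f y ∂μ‖ ≤ C * (μ Set.univ).toReal :=
        norm_integral_le_of_norm_le_const
          (Filter.Eventually.of_forall (fun y => by rw [Real.norm_eq_abs]; exact h y))
    _ ≤ C * 1 := by
        apply mul_le_mul_of_nonneg_left _ hC
        exact ENNReal.toReal_le_of_le_ofReal one_pos.le (by simpa using hμ)
    _ = C := mul_one C

lemma bind_univ (σ : Measure X) (κ : X → Measure X) (hκ : Measurable κ)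
    (hκp : ∀ x, IsProbabilityMeasure (κ x)) : (σ.bind κ) Set.univ = σ Set.univ := by
  rw [Measure.bind_apply MeasurableSet.univ hκ.aemeasurable]
  simp [(hκp _).measure_univ]

lemma isFiniteMeasure_bind (σ : Measure X) [IsFiniteMeasure σ] (κ : X → Measure X)
    (hκ : Measurable κ) (hκp : ∀ x, IsProbabilityMeasure (κ x)) :
    IsFiniteMeasure (σ.bind κ) := by
  constructor
  rw [bind_univ σ κ hκ hκp]
  exact measure_lt_top σ _

lemma measurable_integral_kernel (κ : X → Measure X) (hκ : Measurable κ)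
    (hκp : ∀ x, IsProbabilityMeasure (κ x)) (f : X → ℝ) (hf : Measurable f)
    (C : ℝ) (hfC : ∀ y, |f y| ≤ C) :
    Measurable fun x => ∫ y, f y ∂(κ x) := by
  have hFnn : ∀ y, 0 ≤ f y + C := fun y => by have := (abs_le.1 (hfC y)).1; linarith
  have hFbd : ∀ y, |f y + C| ≤ 2 * C := fun y => by
    have h1 := (abs_le.1 (hfC y)).1; have h2 := (abs_le.1 (hfC y)).2
    rw [abs_le]; constructor <;> linarith [abs_nonneg (f y), hfC y]
  have hFmeas : Measurable fun y => f y + C := hf.add_const C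
  have hmf : Measurable fun y => ENNReal.ofReal (f y + C) :=
    ENNReal.measurable_ofReal.comp hFmeas
  have : (fun x => ∫ y, f y ∂(κ x))
      = fun x => (∫⁻ y, ENNReal.ofReal (f y + C) ∂(κ x)).toReal - C := by
    funext x
    have hint : Integrable (fun y => f y + C) (κ x) :=
      integrable_of_bound (κ x) _ hFmeas.aestronglyMeasurable (2 * C) hFbd
    rw [← ofReal_integral_eq_lintegral_ofReal hint (Filter.Eventually.of_forall hFnn),
      ENNReal.toReal_ofReal (integral_nonneg hFnn),
      integral_add (integrable_of_bound (κ x) f hf.aestronglyMeasurable C hfC)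
        (integrable_const C), integral_const, measureReal_def, (hκp x).measure_univ]
    simp
  rw [this]
  exact (((Measure.measurable_lintegral hmf).comp hκ).ennreal_toReal).sub_const C

lemma integral_bind_nonneg (σ : Measure X) [IsFiniteMeasure σ] (κ : X → Measure X)
    (hκ : Measurable κ) (hκp : ∀ x, IsProbabilityMeasure (κ x))
    (f : X → ℝ) (hf : Measurable f) (hnn : ∀ y, 0 ≤ f y) (C : ℝ) (hfC : ∀ y, f y ≤ C) :
    ∫ y, f y ∂(σ.bind κ) = ∫ x, (∫ y, f y ∂(κ x)) ∂σ := by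
  have hmf : Measurable fun y => ENNReal.ofReal (f y) := ENNReal.measurable_ofReal.comp hf
  have habs : ∀ y, |f y| ≤ max C 0 := fun y => by
    rw [abs_of_nonneg (hnn y)]; exact le_max_of_le_left (hfC y)
  have hint : ∀ x, Integrable f (κ x) := fun x =>
    integrable_of_bound (κ x) f hf.aestronglyMeasurable _ habs
  have inner : ∀ x, ∫⁻ y, ENNReal.ofReal (f y) ∂(κ x) = ENNReal.ofReal (∫ y, f y ∂(κ x)) :=
    fun x => (ofReal_integral_eq_lintegral_ofReal (hint x)
      (Filter.Eventually.of_forall hnn)).symm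
  have hg_meas : Measurable fun x => ∫ y, f y ∂(κ x) :=
    measurable_integral_kernel κ hκ hκp f hf _ habs
  have hg_nn : ∀ x, 0 ≤ ∫ y, f y ∂(κ x) := fun x => integral_nonneg hnn
  have hg_bdd : ∀ x, |∫ y, f y ∂(κ x)| ≤ max C 0 := fun x =>
    abs_integral_le (κ x) (le_of_eq (hκp x).measure_univ) f _ habs (le_max_right _ _)
  have hg_int : Integrable (fun x => ∫ y, f y ∂(κ x)) σ :=
    integrable_of_bound σ _ hg_meas.aestronglyMeasurable _ hg_bdd
  rw [integral_eq_lintegral_of_nonneg_ae (Filter.Eventually.of_forall hnn)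
    hf.aestronglyMeasurable, Measure.lintegral_bind hκ.aemeasurable hmf.aemeasurable]
  simp_rw [inner]
  rw [← ofReal_integral_eq_lintegral_ofReal hg_int (Filter.Eventually.of_forall hg_nn),
    ENNReal.toReal_ofReal (integral_nonneg hg_nn)]

lemma integral_bind (σ : Measure X) [IsFiniteMeasure σ] (κ : X → Measure X)
    (hκ : Measurable κ) (hκp : ∀ x, IsProbabilityMeasure (κ x))
    (f : X → ℝ) (hf : Measurable f) (C : ℝ) (hfC : ∀ y, |f y| ≤ C) :
    ∫ y, f y ∂(σ.bind κ) = ∫ x, (∫ y, f y ∂(κ x)) ∂σ := by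
  haveI := isFiniteMeasure_bind σ κ hκ hκp
  have hFnn : ∀ y, 0 ≤ f y + C := fun y => by have := (abs_le.1 (hfC y)).1; linarith
  have hFbd : ∀ y, f y + C ≤ 2 * C := fun y => by have := (abs_le.1 (hfC y)).2; linarith
  have hFmeas : Measurable fun y => f y + C := hf.add_const C
  have key := integral_bind_nonneg σ κ hκ hκp (fun y => f y + C) hFmeas hFnn (2 * C) hFbd
  have hint : ∀ x, Integrable f (κ x) := fun x =>
    integrable_of_bound (κ x) f hf.aestronglyMeasurable C hfC
  have hFint : Integrable f (σ.bind κ) :=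
    integrable_of_bound _ f hf.aestronglyMeasurable C hfC
  have lhs : ∫ y, (f y + C) ∂(σ.bind κ)
      = (∫ y, f y ∂(σ.bind κ)) + C * (σ Set.univ).toReal := by
    rw [integral_add hFint (integrable_const C), integral_const, measureReal_def, bind_univ σ κ hκ hκp]
    simp [smul_eq_mul, mul_comm]
  have rhs : ∀ x, ∫ y, (f y + C) ∂(κ x) = (∫ y, f y ∂(κ x)) + C := fun x => by
    rw [integral_add (hint x) (integrable_const C), integral_const, measureReal_def, (hκp x).measure_univ]
    simp
  have hg_meas : Measurable fun x => ∫ y, f y ∂(κ x) :=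
    measurable_integral_kernel κ hκ hκp f hf C hfC
  have hg_int : Integrable (fun x => ∫ y, f y ∂(κ x)) σ :=
    integrable_of_bound σ _ hg_meas.aestronglyMeasurable C
      (fun x => abs_integral_le (κ x) (le_of_eq (hκp x).measure_univ) f C hfC
        (le_trans (abs_nonneg (f x)) (hfC x)))
  simp_rw [rhs] at key
  rw [lhs, integral_add hg_int (integrable_const C), integral_const, measureReal_def] at key
  simp only [smul_eq_mul] at key
  linarith [key]



variable (P : ℕ → X → Measure X)

lemma measurable_P (hP : IsMarkovSemigroupN P) {n : ℕ} (hn : 1 ≤ n) : Measurable (P n) :=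
  Measure.measurable_of_measurable_coe _ fun _A hA => hP.2.1 n _ hn hA

lemma P_add (hP : IsMarkovSemigroupN P) {m n : ℕ} (hm : 1 ≤ m) (hn : 1 ≤ n) (x : X) :
    P (m + n) x = (P m x).bind (P n) := by
  refine Measure.ext fun A hA => ?_
  rw [Measure.bind_apply hA (measurable_P P hP hn).aemeasurable]
  exact hP.2.2 m n x A hm hn hA

lemma PfN_bdd (hP : IsMarkovSemigroupN P) {n : ℕ} (hn : 1 ≤ n)
    (f : X → ℝ) (C : ℝ) (hfC : ∀ y, |f y| ≤ C) (x : X) : |PfN P n f x| ≤ C := by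
  haveI := hP.1 n x hn
  exact abs_integral_le (P n x) (le_of_eq (hP.1 n x hn).measure_univ) f C hfC
    (le_trans (abs_nonneg _) (hfC x))

lemma PfN_add (hP : IsMarkovSemigroupN P) {m n : ℕ} (hm : 1 ≤ m) (hn : 1 ≤ n)
    (f : X → ℝ) (hf : Measurable f) (C : ℝ) (hfC : ∀ y, |f y| ≤ C) (x : X) :
    PfN P (m + n) f x = ∫ y, PfN P n f y ∂ (P m x) := by
  haveI := hP.1 m x hm
  rw [PfN, P_add P hP hm hn x]
  exact integral_bind (P m x) (P n) (measurable_P P hP hn) (fun y => hP.1 n y hn) f hf C hfC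

lemma PfN_tendsto (hP : IsMarkovSemigroupN P) {μs : Measure X} (hstab : AsympStableN P μs)
    (f : X → ℝ) (hc : Continuous f) (hb : ∃ C, ∀ x, |f x| ≤ C) (x : X) :
    Tendsto (fun n => PfN P n f x) atTop (𝓝 (∫ y, f y ∂ μs)) := by
  have h := hstab.2.2.2 (Measure.dirac x) inferInstance f hc hb
  refine h.congr' ?_
  filter_upwards [eventually_ge_atTop 1] with n hn
  rw [Measure.dirac_bind (measurable_P P hP hn)]
  rfl

/-- The chain of sub-probability measures used in the main argument. -/
def tauChain (u : X) (M : ℕ → ℕ) (s : ℕ → ℝ) (x : X) : ℕ → Measure X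
  | 0 => Measure.dirac x
  | r + 1 => ((tauChain u M s x r).bind (P (M r))).restrict (Metric.ball u (s r))ᶜ

lemma tauChain_congr (u : X) {M M' : ℕ → ℕ} {s s' : ℕ → ℝ} (x : X) {r : ℕ}
    (hM : ∀ i < r, M i = M' i) (hs : ∀ i < r, s i = s' i) :
    tauChain P u M s x r = tauChain P u M' s' x r := by
  induction r with
  | zero => rfl
  | succ r ih =>
    have h1 := ih (fun i hi => hM i (hi.trans (Nat.lt_succ_self r)))
      (fun i hi => hs i (hi.trans (Nat.lt_succ_self r)))
    show ((tauChain P u M s x r).bind (P (M r))).restrict (Metric.ball u (s r))ᶜ = _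
    rw [h1, hM r (Nat.lt_succ_self r), hs r (Nat.lt_succ_self r)]
    rfl

lemma tauChain_mass_le (hP : IsMarkovSemigroupN P) (u : X) (M : ℕ → ℕ) (s : ℕ → ℝ) (x : X)
    (r : ℕ) (hM : ∀ i < r, 1 ≤ M i) : tauChain P u M s x r Set.univ ≤ 1 := by
  induction r with
  | zero => simp [tauChain]
  | succ r ih =>
    have h1 := ih (fun i hi => hM i (hi.trans (Nat.lt_succ_self r)))
    show (((tauChain P u M s x r).bind (P (M r))).restrict (Metric.ball u (s r))ᶜ)
      Set.univ ≤ 1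
    rw [Measure.restrict_apply_univ]
    calc ((tauChain P u M s x r).bind (P (M r))) (Metric.ball u (s r))ᶜ
        ≤ ((tauChain P u M s x r).bind (P (M r))) Set.univ := measure_mono (Set.subset_univ _)
      _ = tauChain P u M s x r Set.univ :=
          bind_univ _ _ (measurable_P P hP (hM r (Nat.lt_succ_self r)))
            (fun y => hP.1 _ y (hM r (Nat.lt_succ_self r)))
      _ ≤ 1 := h1

lemma isFiniteMeasure_tauChain (hP : IsMarkovSemigroupN P) (u : X) (M : ℕ → ℕ) (s : ℕ → ℝ)
    (x : X) (r : ℕ) (hM : ∀ i < r, 1 ≤ M i) : IsFiniteMeasure (tauChain P u M s x r) :=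
  ⟨lt_of_le_of_lt (tauChain_mass_le P hP u M s x r hM) ENNReal.one_lt_top⟩

lemma PfN_measurable (hP : IsMarkovSemigroupN P) {n : ℕ} (hn : 1 ≤ n)
    (f : X → ℝ) (hf : Measurable f) (C : ℝ) (hfC : ∀ y, |f y| ≤ C) :
    Measurable (PfN P n f) :=
  measurable_integral_kernel (P n) (measurable_P P hP hn) (fun y => hP.1 n y hn) f hf C hfC

lemma tauChain_succ_mass (hP : IsMarkovSemigroupN P) (u : X) (M : ℕ → ℕ) (s : ℕ → ℝ)
    (x : X) (r : ℕ) (hM : ∀ i < r + 1, 1 ≤ M i) :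
    (((tauChain P u M s x r).bind (P (M r))) (Metric.ball u (s r))).toReal
      = ((tauChain P u M s x r) Set.univ).toReal
        - ((tauChain P u M s x (r + 1)) Set.univ).toReal := by
  set τ := tauChain P u M s x r
  set η := τ.bind (P (M r)) with hη
  have hmeas : Measurable (P (M r)) := measurable_P P hP (hM r (Nat.lt_succ_self r))
  have hprob : ∀ y, IsProbabilityMeasure (P (M r) y) :=
    fun y => hP.1 _ y (hM r (Nat.lt_succ_self r))
  haveI : IsFiniteMeasure τ := isFiniteMeasure_tauChain P hP u M s x r
    (fun i hi => hM i (hi.trans (Nat.lt_succ_self r)))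
  haveI : IsFiniteMeasure η := isFiniteMeasure_bind τ (P (M r)) hmeas hprob
  have h1 : tauChain P u M s x (r + 1) Set.univ = η (Metric.ball u (s r))ᶜ := by
    show (η.restrict (Metric.ball u (s r))ᶜ) Set.univ = _
    rw [Measure.restrict_apply_univ]
  have h2 : η (Metric.ball u (s r)) + η (Metric.ball u (s r))ᶜ = η Set.univ :=
    measure_add_measure_compl Metric.isOpen_ball.measurableSet
  have h3 : η Set.univ = τ Set.univ := bind_univ τ _ hmeas hprob
  have h4 : η (Metric.ball u (s r)) ≠ ⊤ := measure_ne_top η _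
  have h5 : η (Metric.ball u (s r))ᶜ ≠ ⊤ := measure_ne_top η _
  rw [h1, ← h3, ← h2, ENNReal.toReal_add h4 h5]
  ring

lemma defect_induction (hP : IsMarkovSemigroupN P) (u : X) (M : ℕ → ℕ) (s : ℕ → ℝ)
    (f : X → ℝ) (hf : Measurable f) (C : ℝ) (hC : 0 < C) (hfC : ∀ y, |f y| ≤ C)
    (c : ℝ) (hc : |c| ≤ C) (ε₀ ε' t : ℝ) (hε' : 0 ≤ ε') (N : ℕ) (hN : 1 ≤ N)
    (hball : ∀ y ∈ Metric.ball u t, ∀ j, N ≤ j → |PfN P j f y - c| ≤ ε')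
    (x : X) (n : ℕ) (hbase : ε₀ ≤ PfN P n f x - c) (r : ℕ)
    (hM : ∀ i < r, 1 ≤ M i) (hs : ∀ i < r, s i < t)
    (hn : (∑ i ∈ Finset.range r, M i) + N ≤ n) :
    ε₀ - ε' + ε' * ((tauChain P u M s x r) Set.univ).toReal
      ≤ ∫ y, (PfN P (n - ∑ i ∈ Finset.range r, M i) f y - c) ∂ (tauChain P u M s x r) := by
  induction r with
  | zero =>
    have h0 : n - ∑ i ∈ Finset.range 0, M i = n := by simp
    have hψm : StronglyMeasurable fun y => PfN P n f y - c :=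
      ((PfN_measurable P hP (le_trans hN (by simpa using hn)) f hf C hfC).sub_const
        c).stronglyMeasurable
    have h1 : ∫ y, (PfN P (n - ∑ i ∈ Finset.range 0, M i) f y - c) ∂ (tauChain P u M s x 0)
        = PfN P n f x - c := by
      simp only [h0]
      exact integral_dirac' _ x hψm
    rw [h1]
    have hm : ((tauChain P u M s x 0) Set.univ).toReal = 1 := by
      show ((Measure.dirac x) Set.univ).toReal = 1
      simp
    rw [hm]
    linarith
  | succ r ih =>
    have hMr : 1 ≤ M r := hM r (Nat.lt_succ_self r)
    have hM' : ∀ i < r, 1 ≤ M i := fun i hi => hM i (hi.trans (Nat.lt_succ_self r))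
    have hs' : ∀ i < r, s i < t := fun i hi => hs i (hi.trans (Nat.lt_succ_self r))
    have hSsucc : (∑ i ∈ Finset.range (r+1), M i) = (∑ i ∈ Finset.range r, M i) + M r :=
      Finset.sum_range_succ M r
    set S := ∑ i ∈ Finset.range r, M i with hS
    have hn' : S + N ≤ n := by
      rw [hSsucc] at hn; omega
    have ihr := ih hM' hs' hn'
    set j := n - S with hj
    set j' := n - (S + M r) with hj'
    have hjj' : j = M r + j' := by omega
    have hj'N : N ≤ j' := by rw [hSsucc] at hn; omega
    have hj'1 : 1 ≤ j' := le_trans hN hj'N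
    set τ := tauChain P u M s x r with hτ
    set η := τ.bind (P (M r)) with hη
    have hmeas : Measurable (P (M r)) := measurable_P P hP hMr
    have hprob : ∀ y, IsProbabilityMeasure (P (M r) y) := fun y => hP.1 _ y hMr
    haveI : IsFiniteMeasure τ := isFiniteMeasure_tauChain P hP u M s x r hM'
    haveI : IsFiniteMeasure η := isFiniteMeasure_bind τ (P (M r)) hmeas hprob
    have hψmeas : Measurable fun y => PfN P j' f y - c :=
      (PfN_measurable P hP hj'1 f hf C hfC).sub_const c
    have hψbd : ∀ y, |PfN P j' f y - c| ≤ 2 * C := fun y => by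
      have h1 := PfN_bdd P hP hj'1 f C hfC y
      have := abs_sub_abs_le_abs_sub (PfN P j' f y) c
      calc |PfN P j' f y - c| ≤ |PfN P j' f y| + |c| := abs_sub _ _
        _ ≤ 2 * C := by linarith
    -- decompose the defect integral
    have hdecomp : ∀ y, PfN P j f y - c = ∫ w, (PfN P j' f w - c) ∂ (P (M r) y) := by
      intro y
      haveI := hP.1 (M r) y hMr
      have h1 : PfN P j f y = ∫ w, PfN P j' f w ∂ (P (M r) y) := by
        rw [hjj']
        exact PfN_add P hP hMr hj'1 f hf C hfC y
      rw [integral_sub (integrable_of_bound _ _ (PfN_measurable P hP hj'1 f hf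
          C hfC).aestronglyMeasurable C (PfN_bdd P hP hj'1 f C hfC))
        (integrable_const c), integral_const, measureReal_def, (hP.1 (M r) y hMr).measure_univ]
      simp [h1]
    have hstep1 : ∫ y, (PfN P j f y - c) ∂ τ = ∫ w, (PfN P j' f w - c) ∂ η := by
      rw [hη, integral_bind τ (P (M r)) hmeas hprob _ hψmeas (2 * C) hψbd]
      exact integral_congr_ae (Filter.Eventually.of_forall fun y => hdecomp y)
    have hint_η : Integrable (fun w => PfN P j' f w - c) η :=
      integrable_of_bound _ _ hψmeas.aestronglyMeasurable (2 * C) hψbd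
    have hG : MeasurableSet (Metric.ball u (s r)) := Metric.isOpen_ball.measurableSet
    have hsplit : ∫ w, (PfN P j' f w - c) ∂ η
        = (∫ w in Metric.ball u (s r), (PfN P j' f w - c) ∂ η)
          + ∫ w, (PfN P j' f w - c) ∂ (tauChain P u M s x (r+1)) := by
      have : tauChain P u M s x (r+1) = η.restrict (Metric.ball u (s r))ᶜ := rfl
      rw [this]
      exact (integral_add_compl hG hint_η).symm
    have hGbound : (∫ w in Metric.ball u (s r), (PfN P j' f w - c) ∂ η)
        ≤ ε' * (η (Metric.ball u (s r))).toReal := by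
      have hmono : ∀ w ∈ Metric.ball u (s r), PfN P j' f w - c ≤ ε' := fun w hw => by
        have hwt : w ∈ Metric.ball u t :=
          Metric.ball_subset_ball (le_of_lt (hs r (Nat.lt_succ_self r))) hw
        have := hball w hwt j' hj'N
        exact le_trans (le_abs_self _) this
      calc (∫ w in Metric.ball u (s r), (PfN P j' f w - c) ∂ η)
          ≤ ∫ _w in Metric.ball u (s r), ε' ∂ η :=
            setIntegral_mono_on hint_η.restrict (integrable_const ε') hG hmono
        _ = (η (Metric.ball u (s r))).toReal * ε' := by
            rw [setIntegral_const, measureReal_def]; simp [smul_eq_mul]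
        _ = ε' * (η (Metric.ball u (s r))).toReal := mul_comm _ _
    have hmass := tauChain_succ_mass P hP u M s x r hM
    rw [← hη, ← hτ] at hmass
    have hgoal : ∫ w, (PfN P j' f w - c) ∂ (tauChain P u M s x (r+1))
        = (∫ y, (PfN P j f y - c) ∂ τ)
          - ∫ w in Metric.ball u (s r), (PfN P j' f w - c) ∂ η := by
      rw [hstep1, hsplit]; ring
    have hfinal : ε₀ - ε' + ε' * ((tauChain P u M s x (r+1)) Set.univ).toReal
        ≤ ∫ w, (PfN P j' f w - c) ∂ (tauChain P u M s x (r+1)) := by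
      rw [hgoal]
      have : ε' * (η (Metric.ball u (s r))).toReal
          = ε' * ((τ Set.univ).toReal - ((tauChain P u M s x (r+1)) Set.univ).toReal) := by
        rw [hmass]
      nlinarith [ihr, hGbound]
    have heq : n - ∑ i ∈ Finset.range (r + 1), M i = j' := by
      rw [hSsucc]
    simpa only [heq] using hfinal

section WeakConv

variable {ι : Type*} {l : Filter ι}

/-- Lower semicontinuity of open-set integrals along weak convergence. -/
lemma eventually_setIntegral_ge
    (η : ι → Measure X) (ηz : Measure X) [IsFiniteMeasure ηz]
    (hmass : ∀ i, η i Set.univ ≤ 1)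
    (hconv : ∀ g : X → ℝ, Continuous g → (∃ C, ∀ y, |g y| ≤ C) →
      Tendsto (fun i => ∫ y, g y ∂ η i) l (𝓝 (∫ y, g y ∂ ηz)))
    (U : Set X) (hU : IsOpen U)
    (g : X → ℝ) (hg : Continuous g) (hgnn : ∀ y, 0 ≤ g y) (C : ℝ) (hgC : ∀ y, |g y| ≤ C)
    (θ : ℝ) (hθ : 0 < θ) :
    ∀ᶠ i in l, (∫ y in U, g y ∂ ηz) - θ ≤ ∫ y in U, g y ∂ η i := by
  rcases Set.eq_empty_or_nonempty Uᶜ with hUc | hUc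
  · -- U = univ
    have hUuniv : U = Set.univ := Set.compl_empty_iff.1 hUc
    subst hUuniv
    simp only [Measure.restrict_univ]
    filter_upwards [(hconv g hg ⟨C, hgC⟩).eventually
      (eventually_ge_nhds (by linarith : (∫ y, g y ∂ ηz) - θ < ∫ y, g y ∂ ηz))] with i hi
    exact hi
  · set gk : ℕ → X → ℝ := fun k y => g y * min 1 (k * Metric.infDist y Uᶜ) with hgk
    have hgk_cont : ∀ k, Continuous (gk k) :=
      fun k => hg.mul (continuous_const.min ((continuous_const.mul
        (Metric.continuous_infDist_pt Uᶜ))))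
    have hgk_nn : ∀ k y, 0 ≤ gk k y := fun k y =>
      mul_nonneg (hgnn y) (le_min zero_le_one
        (mul_nonneg (Nat.cast_nonneg k) Metric.infDist_nonneg))
    have hgk_le : ∀ k y, gk k y ≤ U.indicator g y := by
      intro k y
      by_cases hy : y ∈ U
      · rw [Set.indicator_of_mem hy]
        calc gk k y ≤ g y * 1 := by
              apply mul_le_mul_of_nonneg_left (min_le_left _ _) (hgnn y)
          _ = g y := mul_one _
      · rw [Set.indicator_of_notMem hy]
        have : Metric.infDist y Uᶜ = 0 := Metric.infDist_zero_of_mem (by simpa using hy)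
        simp [hgk, this]
    have hgk_bd : ∀ k y, |gk k y| ≤ C := fun k y => by
      rw [abs_of_nonneg (hgk_nn k y)]
      calc gk k y ≤ g y * 1 :=
            mul_le_mul_of_nonneg_left (min_le_left _ _) (hgnn y)
        _ = g y := mul_one _
        _ ≤ C := le_trans (le_abs_self _) (hgC y)
    have hind_int : Integrable (U.indicator g) ηz := by
      refine (integrable_of_bound ηz g hg.aestronglyMeasurable C hgC).indicator
        hU.measurableSet
    have hgk_tendsto : ∀ y, Tendsto (fun k => gk k y) atTop (𝓝 (U.indicator g y)) := by
      intro y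
      by_cases hy : y ∈ U
      · rw [Set.indicator_of_mem hy]
        have hd : 0 < Metric.infDist y Uᶜ :=
          (hU.isClosed_compl.notMem_iff_infDist_pos hUc).1 (by simpa using hy)
        apply Tendsto.congr' _ tendsto_const_nhds
        filter_upwards [eventually_ge_atTop (Nat.ceil (1 / Metric.infDist y Uᶜ))] with k hk
        have h1 : 1 ≤ (k : ℝ) * Metric.infDist y Uᶜ := by
          have := Nat.ceil_le.1 hk
          calc (1 : ℝ) = (1 / Metric.infDist y Uᶜ) * Metric.infDist y Uᶜ := by
                field_simp
            _ ≤ (k : ℝ) * Metric.infDist y Uᶜ :=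
                mul_le_mul_of_nonneg_right this Metric.infDist_nonneg
        simp [hgk, min_eq_left h1]
      · rw [Set.indicator_of_notMem hy]
        have : Metric.infDist y Uᶜ = 0 := Metric.infDist_zero_of_mem (by simpa using hy)
        simp [hgk, this]
    have hdom : Tendsto (fun k => ∫ y, gk k y ∂ ηz) atTop (𝓝 (∫ y, U.indicator g y ∂ ηz)) := by
      apply tendsto_integral_of_dominated_convergence (fun _ => C)
        (fun k => (hgk_cont k).aestronglyMeasurable) (integrable_const C)
        (fun k => Filter.Eventually.of_forall fun y => by
          rw [Real.norm_eq_abs]; exact hgk_bd k y)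
        (Filter.Eventually.of_forall hgk_tendsto)
    rw [integral_indicator hU.measurableSet] at hdom
    obtain ⟨k, hk⟩ := (hdom.eventually (eventually_ge_nhds
      (by linarith : (∫ y in U, g y ∂ ηz) - θ / 2 < ∫ y in U, g y ∂ ηz))).exists
    have hconvk := (hconv (gk k) (hgk_cont k) ⟨C, hgk_bd k⟩).eventually
      (eventually_ge_nhds (by linarith : (∫ y, gk k y ∂ ηz) - θ / 2 < ∫ y, gk k y ∂ ηz))
    filter_upwards [hconvk] with i hi
    have hle : ∫ y, gk k y ∂ η i ≤ ∫ y in U, g y ∂ η i := by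
      haveI : IsFiniteMeasure (η i) := ⟨lt_of_le_of_lt (hmass i) ENNReal.one_lt_top⟩
      calc ∫ y, gk k y ∂ η i ≤ ∫ y, U.indicator g y ∂ η i :=
            integral_mono
              (integrable_of_bound _ _ (hgk_cont k).aestronglyMeasurable C (hgk_bd k))
              ((integrable_of_bound _ g hg.aestronglyMeasurable C hgC).indicator
                hU.measurableSet)
              (hgk_le k)
        _ = ∫ y in U, g y ∂ η i := integral_indicator hU.measurableSet
    linarith

lemma tendsto_setIntegral_compl_ball_nonneg
    (η : ι → Measure X) (ηz : Measure X) [IsFiniteMeasure ηz]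
    (hmass : ∀ i, η i Set.univ ≤ 1)
    (hconv : ∀ g : X → ℝ, Continuous g → (∃ C, ∀ y, |g y| ≤ C) →
      Tendsto (fun i => ∫ y, g y ∂ η i) l (𝓝 (∫ y, g y ∂ ηz)))
    (u0 : X) (s0 : ℝ) (hnull : ηz (Metric.sphere u0 s0) = 0)
    (g : X → ℝ) (hg : Continuous g) (hgnn : ∀ y, 0 ≤ g y) (C : ℝ) (hgC : ∀ y, |g y| ≤ C) :
    Tendsto (fun i => ∫ y in (Metric.ball u0 s0)ᶜ, g y ∂ η i) l
      (𝓝 (∫ y in (Metric.ball u0 s0)ᶜ, g y ∂ ηz)) := by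
  set U := Metric.ball u0 s0 with hU
  set F := Uᶜ with hF
  set U' := (Metric.closedBall u0 s0)ᶜ with hU'
  have hU'F : U' ⊆ F := Set.compl_subset_compl.2 Metric.ball_subset_closedBall
  have hcongr : ηz.restrict U' = ηz.restrict F := by
    apply Measure.restrict_congr_set
    rw [MeasureTheory.ae_eq_set]
    constructor
    · rw [Set.diff_eq_empty.2 hU'F]
      exact measure_empty
    · apply measure_mono_null _ hnull
      intro y hy
      simp only [hF, hU, hU', Set.mem_diff, Set.mem_compl_iff, Metric.mem_ball,
        Metric.mem_closedBall, not_lt, not_not] at hy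
      simp only [Metric.mem_sphere]
      exact le_antisymm hy.2 hy.1
  have hL : ∫ y in U', g y ∂ ηz = ∫ y in F, g y ∂ ηz := by rw [hcongr]
  rw [Metric.tendsto_nhds]
  intro ε hε
  have hθ : 0 < ε / 4 := by linarith
  -- lower bound
  have hlow := eventually_setIntegral_ge η ηz hmass hconv U'
    (Metric.isClosed_closedBall.isOpen_compl) g hg hgnn C hgC (ε/4) hθ
  -- upper bound pieces
  have hup1 := (hconv g hg ⟨C, hgC⟩).eventually (eventually_le_nhds
    (by linarith : (∫ y, g y ∂ ηz) < (∫ y, g y ∂ ηz) + ε / 4))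
  have hup2 := eventually_setIntegral_ge η ηz hmass hconv U Metric.isOpen_ball
    g hg hgnn C hgC (ε/4) hθ
  filter_upwards [hlow, hup1, hup2] with i h1 h2 h3
  haveI : IsFiniteMeasure (η i) := ⟨lt_of_le_of_lt (hmass i) ENNReal.one_lt_top⟩
  have hint_i : Integrable g (η i) := integrable_of_bound _ g hg.aestronglyMeasurable C hgC
  have hint_z : Integrable g ηz := integrable_of_bound _ g hg.aestronglyMeasurable C hgC
  have hsplit_i : (∫ y in U, g y ∂ η i) + (∫ y in F, g y ∂ η i) = ∫ y, g y ∂ η i :=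
    integral_add_compl Metric.isOpen_ball.measurableSet hint_i
  have hsplit_z : (∫ y in U, g y ∂ ηz) + (∫ y in F, g y ∂ ηz) = ∫ y, g y ∂ ηz :=
    integral_add_compl Metric.isOpen_ball.measurableSet hint_z
  have hmono : ∫ y in U', g y ∂ η i ≤ ∫ y in F, g y ∂ η i := by
    apply setIntegral_mono_set hint_i.integrableOn
      (Filter.Eventually.of_forall hgnn)
    exact Filter.Eventually.of_forall (fun y hy => hU'F hy)
  rw [Real.dist_eq, abs_lt]
  constructor
  · -- L - ε < ∫_F g dη i
    have : (∫ y in U', g y ∂ ηz) - ε / 4 ≤ ∫ y in U', g y ∂ η i := h1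
    rw [hL] at this
    linarith
  · -- ∫_F g dη i < L + ε
    have e1 : ∫ y in F, g y ∂ η i = (∫ y, g y ∂ η i) - ∫ y in U, g y ∂ η i := by
      linarith
    have e2 : ∫ y in F, g y ∂ ηz = (∫ y, g y ∂ ηz) - ∫ y in U, g y ∂ ηz := by
      linarith
    linarith

lemma tendsto_setIntegral_compl_ball
    (η : ι → Measure X) (ηz : Measure X) [IsFiniteMeasure ηz]
    (hmass : ∀ i, η i Set.univ ≤ 1) (hmassz : ηz Set.univ ≤ 1)
    (hconv : ∀ g : X → ℝ, Continuous g → (∃ C, ∀ y, |g y| ≤ C) →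
      Tendsto (fun i => ∫ y, g y ∂ η i) l (𝓝 (∫ y, g y ∂ ηz)))
    (u0 : X) (s0 : ℝ) (hnull : ηz (Metric.sphere u0 s0) = 0)
    (g : X → ℝ) (hg : Continuous g) (C : ℝ) (hgC : ∀ y, |g y| ≤ C) :
    Tendsto (fun i => ∫ y in (Metric.ball u0 s0)ᶜ, g y ∂ η i) l
      (𝓝 (∫ y in (Metric.ball u0 s0)ᶜ, g y ∂ ηz)) := by
  have hg1nn : ∀ y, 0 ≤ g y + |C| := fun y => by
    have h1 := (abs_le.1 (hgC y)).1
    have h2 := le_abs_self C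
    linarith
  have hg1bd : ∀ y, abs (g y + abs C) ≤ 2 * abs C := fun y => by
    rw [abs_le]
    have h1 := (abs_le.1 (hgC y)).1
    have h2 := (abs_le.1 (hgC y)).2
    have h3 := le_abs_self C
    have h4 := neg_abs_le C
    constructor <;> linarith
  have hconst_nn : ∀ _y : X, (0:ℝ) ≤ |C| := fun _ => abs_nonneg C
  have hconst_bd : ∀ _y : X, abs (abs C) ≤ abs C := fun _ => le_of_eq (abs_abs C)
  have h1 := tendsto_setIntegral_compl_ball_nonneg η ηz hmass hconv u0 s0 hnull
    (fun y => g y + |C|) (hg.add continuous_const) hg1nn (2 * |C|) hg1bd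
  have h2 := tendsto_setIntegral_compl_ball_nonneg η ηz hmass hconv u0 s0 hnull
    (fun _ => |C|) continuous_const hconst_nn (|C|) hconst_bd
  have hdiff := h1.sub h2
  have key : ∀ (μ : Measure X), μ Set.univ ≤ 1 →
      (∫ y in (Metric.ball u0 s0)ᶜ, (g y + |C|) ∂ μ)
        - (∫ _y in (Metric.ball u0 s0)ᶜ, |C| ∂ μ)
      = ∫ y in (Metric.ball u0 s0)ᶜ, g y ∂ μ := by
    intro μ hμ
    haveI : IsFiniteMeasure μ := ⟨lt_of_le_of_lt hμ ENNReal.one_lt_top⟩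
    rw [← integral_sub]
    · simp
    · exact (integrable_of_bound _ _ ((hg.add continuous_const).aestronglyMeasurable)
        (2 * |C|) hg1bd).restrict
    · exact (integrable_const _).restrict
  have hfin := hdiff.congr (fun i => key (η i) (hmass i))
  rw [key ηz hmassz] at hfin
  exact hfin

end WeakConv

lemma tauChain_weak_conv (hP : IsMarkovSemigroupN P) (hFeller : FellerN P)
    (u z : X) (M : ℕ → ℕ) (s : ℕ → ℝ) (r : ℕ)
    (hM : ∀ i < r, 1 ≤ M i)
    (hnull : ∀ i < r, ((tauChain P u M s z i).bind (P (M i))) (Metric.sphere u (s i)) = 0)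
    (g : X → ℝ) (hg : Continuous g) (C : ℝ) (hgC : ∀ y, |g y| ≤ C) :
    Tendsto (fun x => ∫ y, g y ∂ (tauChain P u M s x r)) (𝓝 z)
      (𝓝 (∫ y, g y ∂ (tauChain P u M s z r))) := by
  induction r generalizing g C with
  | zero =>
    have e : ∀ x : X, ∫ y, g y ∂ (tauChain P u M s x 0) = g x := fun x =>
      integral_dirac' g x hg.stronglyMeasurable
    rw [e z]
    exact (hg.tendsto z).congr (fun x => (e x).symm)
  | succ r ih =>
    have hMr : 1 ≤ M r := hM r (Nat.lt_succ_self r)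
    have hM' : ∀ i < r, 1 ≤ M i := fun i hi => hM i (hi.trans (Nat.lt_succ_self r))
    have hnull' : ∀ i < r, ((tauChain P u M s z i).bind (P (M i)))
        (Metric.sphere u (s i)) = 0 := fun i hi => hnull i (hi.trans (Nat.lt_succ_self r))
    set η : X → Measure X := fun x => (tauChain P u M s x r).bind (P (M r)) with hηdef
    have hmeas : Measurable (P (M r)) := measurable_P P hP hMr
    have hprob : ∀ y, IsProbabilityMeasure (P (M r) y) := fun y => hP.1 _ y hMr
    have hmass : ∀ x, η x Set.univ ≤ 1 := fun x => by
      rw [hηdef]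
      simp only
      rw [bind_univ _ _ hmeas hprob]
      exact tauChain_mass_le P hP u M s x r hM'
    haveI : IsFiniteMeasure (η z) := ⟨lt_of_le_of_lt (hmass z) ENNReal.one_lt_top⟩
    have hconv : ∀ G : X → ℝ, Continuous G → (∃ CG, ∀ y, |G y| ≤ CG) →
        Tendsto (fun x => ∫ y, G y ∂ η x) (𝓝 z) (𝓝 (∫ y, G y ∂ η z)) := by
      intro G hGc hGb
      obtain ⟨CG, hCG⟩ := hGb
      obtain ⟨hPfc, CP, hCP⟩ := hFeller (M r) hMr G hGc ⟨CG, hCG⟩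
      have e : ∀ x : X, ∫ y, G y ∂ η x = ∫ y, PfN P (M r) G y ∂ (tauChain P u M s x r) := by
        intro x
        haveI : IsFiniteMeasure (tauChain P u M s x r) :=
          isFiniteMeasure_tauChain P hP u M s x r hM'
        exact integral_bind _ (P (M r)) hmeas hprob G hGc.measurable CG hCG
      rw [e z]
      exact (ih hM' hnull' (PfN P (M r) G) hPfc CP hCP).congr (fun x => (e x).symm)
    have hkey := tendsto_setIntegral_compl_ball η (η z) hmass (hmass z) hconv u (s r)
      (hnull r (Nat.lt_succ_self r)) g hg C hgC
    exact hkey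

lemma bind_smul (σ : Measure X) (κ : X → Measure X) (hκ : Measurable κ) (c : ℝ≥0∞) :
    (c • σ).bind κ = c • (σ.bind κ) := by
  refine Measure.ext fun A hA => ?_
  rw [Measure.bind_apply hA hκ.aemeasurable, Measure.smul_apply, Measure.bind_apply hA hκ.aemeasurable,
    lintegral_smul_measure, smul_eq_mul]

lemma integral_one_eq (μ : Measure X) [IsFiniteMeasure μ] :
    ∫ _y, (1:ℝ) ∂ μ = (μ Set.univ).toReal := by
  rw [integral_const, measureReal_def]
  simp

lemma exists_good_radius (η : Measure X) [IsFiniteMeasure η] (u : X) {p q : ℝ} (hpq : p < q) :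
    ∃ s, p < s ∧ s < q ∧ η (Metric.sphere u s) = 0 := by
  have mbles : ∀ r : ℝ, MeasurableSet (Metric.sphere u r) :=
    fun r => Metric.isClosed_sphere.measurableSet
  have disjs : Pairwise (Function.onFun Disjoint fun r : ℝ => Metric.sphere u r) := by
    intro r r' hrr'
    simp only [Function.onFun, Set.disjoint_left]
    intro y hy hy'
    simp only [Metric.mem_sphere] at hy hy'
    exact hrr' (hy.symm.trans hy')
  have key := Measure.countable_meas_pos_of_disjoint_iUnion (μ := η) mbles disjs
  have aux := measure_diff_null (s := Set.Ioo p q) (Set.Countable.measure_zero key volume)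
  have len_pos : 0 < ENNReal.ofReal (q - p) := by simp only [hpq, ENNReal.ofReal_pos, sub_pos]
  rw [← Real.volume_Ioo, ← aux] at len_pos
  rcases nonempty_of_measure_ne_zero len_pos.ne.symm with ⟨r, ⟨r_in_Ioo, hr⟩⟩
  refine ⟨r, r_in_Ioo.1, r_in_Ioo.2, ?_⟩
  simpa only [Set.mem_setOf_eq, not_lt, le_zero_iff] using hr

lemma exists_unif_ball [CompleteSpace X]
    (φ : ℕ → X → ℝ) (hcont : ∀ j, 1 ≤ j → Continuous (φ j)) (c ε' : ℝ) (hε' : 0 < ε')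
    (hconv : ∀ x, Tendsto (fun j => φ j x) atTop (𝓝 c))
    (V : Set X) (hV : IsOpen V) (hVne : V.Nonempty) :
    ∃ u t N, 0 < t ∧ 1 ≤ N ∧ Metric.ball u t ⊆ V ∧
      ∀ y ∈ Metric.ball u t, ∀ j, N ≤ j → |φ j y - c| ≤ ε' := by
  set E : ℕ → Set X := fun m => ⋂ (j : ℕ) (_ : max m 1 ≤ j), {x | |φ j x - c| ≤ ε'} with hE
  have hEclosed : ∀ m, IsClosed (E m) := by
    intro m
    apply isClosed_iInter
    intro j
    apply isClosed_iInter
    intro hj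
    have hj1 : 1 ≤ j := le_trans (le_max_right m 1) hj
    have : Continuous fun x => |φ j x - c| := ((hcont j hj1).sub continuous_const).abs
    exact isClosed_le this continuous_const
  have hEcover : ⋃ m, E m = Set.univ := by
    ext x
    simp only [Set.mem_iUnion, Set.mem_univ, iff_true]
    have := (hconv x).eventually (eventually_le_nhds (by linarith : c < c + ε'))
    have h2 := (hconv x).eventually (eventually_ge_nhds (by linarith : c - ε' < c))
    obtain ⟨m, hm⟩ := (this.and h2).exists_forall_of_atTop
    refine ⟨m, ?_⟩
    simp only [hE, Set.mem_iInter, Set.mem_setOf_eq]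
    intro j hj
    have := hm j (le_trans (le_max_left m 1) hj)
    rw [abs_le]
    constructor <;> linarith [this.1, this.2]
  have hdense := dense_iUnion_interior_of_closed hEclosed hEcover
  obtain ⟨w, hwV, hwE⟩ := hdense.inter_open_nonempty V hV hVne
  obtain ⟨m, hm⟩ := Set.mem_iUnion.1 hwE
  have hopen : IsOpen (interior (E m) ∩ V) := isOpen_interior.inter hV
  obtain ⟨t, ht, hball⟩ := Metric.isOpen_iff.1 hopen w ⟨hm, hwV⟩
  refine ⟨w, t, max m 1, ht, le_max_right m 1, fun y hy => (hball hy).2, ?_⟩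
  intro y hy j hj
  have hyE : y ∈ E m := interior_subset (hball hy).1
  simp only [hE, Set.mem_iInter, Set.mem_setOf_eq] at hyE
  exact hyE j hj

lemma key_contradiction [CompleteSpace X]
    (hP : IsMarkovSemigroupN P) (hFeller : FellerN P) (μs : Measure X)
    (hstab : AsympStableN P μs) (hint : (interior (msupp μs)).Nonempty)
    (z : X) (f : X → ℝ) (hfc : Continuous f) (C : ℝ) (hC : 0 < C) (hfC : ∀ y, |f y| ≤ C)
    (ε₀ : ℝ) (hε₀ : 0 < ε₀)
    (H : ∀ δ, 0 < δ → ∀ n₀ : ℕ, ∃ x n, dist x z < δ ∧ n₀ ≤ n ∧ 1 ≤ n ∧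
      ε₀ ≤ PfN P n f x - ∫ y, f y ∂ μs) : False := by
  haveI hμsprob : IsProbabilityMeasure μs := hstab.1
  set c := ∫ y, f y ∂ μs with hc_def
  have hc : |c| ≤ C := abs_integral_le μs (le_of_eq hμsprob.measure_univ) f C hfC
    (le_trans (abs_nonneg (f z)) (hfC z))
  have hφcont : ∀ j, 1 ≤ j → Continuous (fun x => PfN P j f x) := fun j hj =>
    (hFeller j hj f hfc ⟨C, hfC⟩).1
  have hφconv : ∀ x, Tendsto (fun j => PfN P j f x) atTop (𝓝 c) :=
    PfN_tendsto P hP hstab f hfc ⟨C, hfC⟩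
  set ε' := ε₀ / 2 with hε'def
  have hε' : 0 < ε' := by rw [hε'def]; linarith
  -- Baire ball inside the support
  obtain ⟨u, t, N, ht, hN, hV, hball⟩ := exists_unif_ball (fun j x => PfN P j f x)
    hφcont c ε' hε' hφconv (interior (msupp μs)) isOpen_interior hint
  have hu : u ∈ msupp μs := interior_subset (hV (Metric.mem_ball_self ht))
  have hqpos : 0 < μs (Metric.ball u (t/4)) := hu (t/4) (by linarith)
  set a := (μs (Metric.ball u (t/4))).toReal with ha_def
  have ha : 0 < a := ENNReal.toReal_pos hqpos.ne' (measure_ne_top μs _)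
  -- the bump function g
  set g : X → ℝ := fun y => max 0 (min 1 (2 - (4/t) * dist y u)) with hg_def
  have hgcont : Continuous g := continuous_const.max (continuous_const.min
    (continuous_const.sub (continuous_const.mul (continuous_id.dist continuous_const))))
  have hgnn : ∀ y, 0 ≤ g y := fun y => le_max_left _ _
  have hgle1 : ∀ y, g y ≤ 1 := fun y => max_le (by norm_num) (min_le_left _ _)
  have hgbd : ∀ y, |g y| ≤ 1 := fun y => abs_le.2 ⟨by linarith [hgnn y], hgle1 y⟩
  have hg_ind : ∀ y, (Metric.ball u (t/4)).indicator (fun _ => (1:ℝ)) y ≤ g y := by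
    intro y
    by_cases hy : y ∈ Metric.ball u (t/4)
    · rw [Set.indicator_of_mem hy]
      have hy' : dist y u < t/4 := Metric.mem_ball.1 hy
      have h4t : (0:ℝ) < 4/t := by positivity
      have h1 : (4/t) * dist y u ≤ (4/t) * (t/4) :=
        mul_le_mul_of_nonneg_left hy'.le h4t.le
      have h2 : (4/t) * (t/4) = 1 := by field_simp
      have h3 : (1:ℝ) ≤ 2 - (4/t) * dist y u := by linarith
      rw [hg_def]
      simp only [min_eq_left h3]
      exact le_max_right _ _
    · rw [Set.indicator_of_notMem hy]
      exact hgnn y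
  have hg_supp : ∀ (s0 : ℝ), t/2 < s0 → ∀ y,
      g y ≤ (Metric.ball u s0).indicator (fun _ => (1:ℝ)) y := by
    intro s0 hs0 y
    by_cases hy : y ∈ Metric.ball u s0
    · rw [Set.indicator_of_mem hy]; exact hgle1 y
    · rw [Set.indicator_of_notMem hy]
      have hy' : s0 ≤ dist y u := by
        have := Metric.mem_ball.not.1 hy
        linarith [not_lt.1 this]
      have h4t : (0:ℝ) < 4/t := by positivity
      have h1 : (4/t) * (t/2) ≤ (4/t) * dist y u :=
        mul_le_mul_of_nonneg_left (by linarith) h4t.le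
      have h2 : (4/t) * (t/2) = 2 := by field_simp; ring
      have h3 : 2 - (4/t) * dist y u ≤ 0 := by linarith
      rw [hg_def]
      simp only
      rw [max_eq_left (le_trans (min_le_right _ _) h3)]
  have hga : a ≤ ∫ y, g y ∂ μs := by
    have h1 : ∫ y, (Metric.ball u (t/4)).indicator (fun _ => (1:ℝ)) y ∂ μs = a := by
      rw [integral_indicator Metric.isOpen_ball.measurableSet, setIntegral_const, measureReal_def]
      simp [ha_def]
    rw [← h1]
    exact integral_mono
      ((integrable_const (1:ℝ)).indicator Metric.isOpen_ball.measurableSet)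
      (integrable_of_bound μs g hgcont.aestronglyMeasurable 1 hgbd) hg_ind
  set b := ε' / (2*C) with hb_def
  have hb : 0 < b := by rw [hb_def]; positivity
  set γ := a * b / 4 with hγ_def
  have hγ : 0 < γ := by rw [hγ_def]; positivity
  set R := Nat.ceil (1/γ) + 1 with hR_def
  -- the goodness predicate for inductive choices
  set Good : (ℕ → ℕ) → (ℕ → ℝ) → ℕ → Prop := fun M s i =>
    1 ≤ M i ∧ t/2 < s i ∧ s i < t ∧
    ((tauChain P u M s z i).bind (P (M i))) (Metric.sphere u (s i)) = 0 ∧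
    a * b / 2 ≤ ∫ y, g y ∂ ((tauChain P u M s z i).bind (P (M i))) with hGood_def
  -- mass lower bound at any point with a defect
  have massX : ∀ (M : ℕ → ℕ) (s : ℕ → ℝ) (r : ℕ), (∀ i, i < r → 1 ≤ M i) →
      (∀ i, i < r → s i < t) → ∀ (x : X) (n : ℕ),
      (∑ i ∈ Finset.range r, M i) + N ≤ n → ε₀ ≤ PfN P n f x - c →
      b ≤ ((tauChain P u M s x r) Set.univ).toReal := by
    intro M s r hM hst x n hn hdef
    have hD := defect_induction P hP u M s f hfc.measurable C hC hfC c hc ε₀ ε' t hε'.le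
      N hN hball x n hdef r hM hst hn
    haveI : IsFiniteMeasure (tauChain P u M s x r) :=
      isFiniteMeasure_tauChain P hP u M s x r hM
    have hj1 : 1 ≤ n - ∑ i ∈ Finset.range r, M i := by omega
    have hψbd : ∀ y, ‖PfN P (n - ∑ i ∈ Finset.range r, M i) f y - c‖ ≤ 2*C := fun y => by
      rw [Real.norm_eq_abs]
      have h1 := PfN_bdd P hP hj1 f C hfC y
      calc |PfN P (n - ∑ i ∈ Finset.range r, M i) f y - c|
          ≤ |PfN P (n - ∑ i ∈ Finset.range r, M i) f y| + |c| := abs_sub _ _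
        _ ≤ 2*C := by linarith
    have hub : ∫ y, (PfN P (n - ∑ i ∈ Finset.range r, M i) f y - c)
        ∂ (tauChain P u M s x r)
        ≤ 2*C * ((tauChain P u M s x r) Set.univ).toReal := by
      have := norm_integral_le_of_norm_le_const (μ := tauChain P u M s x r)
        (Filter.Eventually.of_forall hψbd)
      exact le_trans (le_abs_self _) (by rwa [Real.norm_eq_abs] at this)
    have hm0 : 0 ≤ ((tauChain P u M s x r) Set.univ).toReal := ENNReal.toReal_nonneg
    have key2 : ε' ≤ 2*C * ((tauChain P u M s x r) Set.univ).toReal := by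
      have he : ε₀ - ε' = ε' := by rw [hε'def]; ring
      nlinarith [hD, hub, mul_nonneg hε'.le hm0]
    rw [hb_def, div_le_iff₀ (by positivity)]
    linarith [key2]
  -- mass lower bound at z given good prefix
  have massZ : ∀ (M : ℕ → ℕ) (s : ℕ → ℝ) (r : ℕ), (∀ i, i < r → Good M s i) →
      b ≤ ((tauChain P u M s z r) Set.univ).toReal := by
    intro M s r hGd
    have hM : ∀ i, i < r → 1 ≤ M i := fun i hi => (hGd i hi).1
    have hst : ∀ i, i < r → s i < t := fun i hi => (hGd i hi).2.2.1
    have hnull : ∀ i, i < r →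
        ((tauChain P u M s z i).bind (P (M i))) (Metric.sphere u (s i)) = 0 :=
      fun i hi => (hGd i hi).2.2.2.1
    have hbad : ∀ k : ℕ, ∃ x, dist x z < 1/(k+1) ∧
        b ≤ ((tauChain P u M s x r) Set.univ).toReal := by
      intro k
      obtain ⟨x, n, hxz, hn, _hn1, hdef⟩ := H (1/(k+1)) (by positivity)
        ((∑ i ∈ Finset.range r, M i) + N)
      exact ⟨x, hxz, massX M s r hM hst x n hn hdef⟩
    choose xs hxs1 hxs2 using hbad
    have hxs_tendsto : Tendsto xs atTop (𝓝 z) := by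
      rw [tendsto_iff_dist_tendsto_zero]
      apply squeeze_zero (fun k => dist_nonneg) (fun k => (hxs1 k).le)
      exact tendsto_one_div_add_atTop_nhds_zero_nat
    have hW := tauChain_weak_conv P hP hFeller u z M s r hM hnull
      (fun _ => (1:ℝ)) continuous_const 1 (fun _ => by norm_num)
    have hmass_eq : ∀ x, ∫ _y, (1:ℝ) ∂ (tauChain P u M s x r)
        = ((tauChain P u M s x r) Set.univ).toReal := fun x => by
      haveI := isFiniteMeasure_tauChain P hP u M s x r hM
      exact integral_one_eq _
    have hcomp := hW.comp hxs_tendsto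
    rw [hmass_eq z] at hcomp
    refine ge_of_tendsto hcomp ?_
    refine Filter.Eventually.of_forall fun k => ?_
    show b ≤ ∫ _y, (1:ℝ) ∂ (tauChain P u M s (xs k) r)
    rw [hmass_eq (xs k)]
    exact hxs2 k
  -- inductive construction of good choices
  have claim : ∀ r : ℕ, ∃ M s, ∀ i, i < r → Good M s i := by
    intro r
    induction r with
    | zero => exact ⟨fun _ => 1, fun _ => 3*t/4, fun i hi => absurd hi (Nat.not_lt_zero i)⟩
    | succ r ihr =>
      obtain ⟨M, s, hGd⟩ := ihr
      have hM : ∀ i, i < r → 1 ≤ M i := fun i hi => (hGd i hi).1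
      have hmassz := massZ M s r hGd
      set τ := tauChain P u M s z r with hτ_def
      haveI : IsFiniteMeasure τ := isFiniteMeasure_tauChain P hP u M s z r hM
      set m := τ Set.univ with hm_def
      have hm0 : m ≠ 0 := by
        intro h
        rw [h] at hmassz
        simp at hmassz
        linarith
      have hm_top : m ≠ ⊤ := measure_ne_top τ _
      set ν := m⁻¹ • τ with hν_def
      haveI hνprob : IsProbabilityMeasure ν := by
        constructor
        rw [hν_def, Measure.smul_apply, smul_eq_mul, ← hm_def,
          ENNReal.inv_mul_cancel hm0 hm_top]
      have hstg := hstab.2.2.2 ν hνprob g hgcont ⟨1, hgbd⟩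
      have hlim : a/2 < ∫ y, g y ∂ μs := lt_of_lt_of_le (by linarith) hga
      have hev := (hstg.eventually (eventually_ge_nhds hlim)).and (eventually_ge_atTop 1)
      obtain ⟨Mr, hMrge, hMr1⟩ := hev.exists
      have hMrmeas : Measurable (P Mr) := measurable_P P hP hMr1
      have hentry : a*b/2 ≤ ∫ y, g y ∂ (τ.bind (P Mr)) := by
        have hτν : τ = m • ν := by
          rw [hν_def, smul_smul, ENNReal.mul_inv_cancel hm0 hm_top, one_smul]
        rw [hτν, bind_smul ν (P Mr) hMrmeas, integral_smul_measure, smul_eq_mul]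
        have h1 : b ≤ m.toReal := hmassz
        have h2 : a/2 ≤ ∫ y, g y ∂ (ν.bind (P Mr)) := hMrge
        calc a*b/2 = b * (a/2) := by ring
          _ ≤ m.toReal * ∫ y, g y ∂ (ν.bind (P Mr)) :=
              mul_le_mul h1 h2 (by linarith) ENNReal.toReal_nonneg
      haveI : IsFiniteMeasure (τ.bind (P Mr)) :=
        isFiniteMeasure_bind τ (P Mr) hMrmeas (fun y => hP.1 _ y hMr1)
      obtain ⟨sr, hsr1, hsr2, hsr3⟩ := exists_good_radius (τ.bind (P Mr)) u
        (show t/2 < t by linarith)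
      refine ⟨Function.update M r Mr, Function.update s r sr, ?_⟩
      have hτeq : ∀ i, i ≤ r → tauChain P u (Function.update M r Mr)
          (Function.update s r sr) z i = tauChain P u M s z i := by
        intro i hi
        apply tauChain_congr
        · intro j hj; exact Function.update_of_ne (by omega) _ _
        · intro j hj; exact Function.update_of_ne (by omega) _ _
      intro i hi
      rcases Nat.lt_or_ge i r with hir | hir
      · have hG := hGd i hir
        rw [hGood_def]
        simp only [Function.update_of_ne (show i ≠ r by omega)]
        rw [hτeq i hir.le]
        exact hG
      · have hieq : i = r := by omega
        subst hieq
        rw [hGood_def]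
        simp only [Function.update_self]
        rw [hτeq i le_rfl]
        exact ⟨hMr1, hsr1, hsr2, hsr3, hentry⟩
  -- extract good choices up to R and derive the contradiction
  obtain ⟨M, s, hGd⟩ := claim R
  have hM : ∀ i, i < R → 1 ≤ M i := fun i hi => (hGd i hi).1
  have hst : ∀ i, i < R → s i < t := fun i hi => (hGd i hi).2.2.1
  have hst2 : ∀ i, i < R → t/2 < s i := fun i hi => (hGd i hi).2.1
  have hnull : ∀ i, i < R →
      ((tauChain P u M s z i).bind (P (M i))) (Metric.sphere u (s i)) = 0 :=
    fun i hi => (hGd i hi).2.2.2.1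
  -- entry transfer to points near z
  have htransfer : ∀ᶠ x in 𝓝 z, ∀ r ∈ Finset.range R,
      γ ≤ ∫ y, g y ∂ ((tauChain P u M s x r).bind (P (M r))) := by
    rw [Filter.eventually_all_finset]
    intro r hrR
    have hr : r < R := Finset.mem_range.1 hrR
    have hMr1 : 1 ≤ M r := hM r hr
    have hMrmeas : Measurable (P (M r)) := measurable_P P hP hMr1
    have hprob : ∀ y, IsProbabilityMeasure (P (M r) y) := fun y => hP.1 _ y hMr1
    have hM' : ∀ i, i < r → 1 ≤ M i := fun i hi => hM i (hi.trans hr)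
    have hnull' : ∀ i, i < r →
        ((tauChain P u M s z i).bind (P (M i))) (Metric.sphere u (s i)) = 0 :=
      fun i hi => hnull i (hi.trans hr)
    obtain ⟨hPfc, CP, hCP⟩ := hFeller (M r) hMr1 g hgcont ⟨1, hgbd⟩
    have hWr := tauChain_weak_conv P hP hFeller u z M s r hM' hnull'
      (fun x => PfN P (M r) g x) hPfc CP hCP
    have hid : ∀ x, ∫ y, PfN P (M r) g y ∂ (tauChain P u M s x r)
        = ∫ y, g y ∂ ((tauChain P u M s x r).bind (P (M r))) := fun x => by
      haveI := isFiniteMeasure_tauChain P hP u M s x r hM'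
      exact (integral_bind _ (P (M r)) hMrmeas hprob g hgcont.measurable 1 hgbd).symm
    rw [hid z] at hWr
    have hab : 0 < a*b := mul_pos ha hb
    have hlimge : γ < ∫ y, g y ∂ ((tauChain P u M s z r).bind (P (M r))) := by
      have h1 := (hGd r hr).2.2.2.2
      have h2 : γ < a*b/2 := by rw [hγ_def]; linarith
      linarith
    exact (hWr.congr hid).eventually (eventually_ge_nhds hlimge)
  obtain ⟨δ, hδpos, hδball⟩ := Metric.eventually_nhds_iff_ball.1 htransfer
  obtain ⟨x, n, hxz, hn, _hn1, hdef⟩ := H δ hδpos ((∑ i ∈ Finset.range R, M i) + N)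
  have hxent := hδball x (Metric.mem_ball.2 hxz)
  have hdec : ∀ r, r ≤ R → ((tauChain P u M s x r) Set.univ).toReal ≤ 1 - r * γ := by
    intro r
    induction r with
    | zero =>
      intro _
      have he : tauChain P u M s x 0 = Measure.dirac x := rfl
      rw [he]
      simp
    | succ r ih =>
      intro hr
      have hrR : r < R := lt_of_lt_of_le (Nat.lt_succ_self r) hr
      have ihr := ih (Nat.le_of_succ_le hr)
      have hMr1 := hM r hrR
      have hMrmeas := measurable_P P hP hMr1
      have hprob : ∀ y, IsProbabilityMeasure (P (M r) y) := fun y => hP.1 _ y hMr1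
      have hM' : ∀ i, i < r + 1 → 1 ≤ M i := fun i hi => hM i (lt_of_lt_of_le hi hr)
      haveI : IsFiniteMeasure (tauChain P u M s x r) :=
        isFiniteMeasure_tauChain P hP u M s x r (fun i hi => hM i (hi.trans hrR))
      haveI : IsFiniteMeasure ((tauChain P u M s x r).bind (P (M r))) :=
        isFiniteMeasure_bind _ (P (M r)) hMrmeas hprob
      have hmasseq := tauChain_succ_mass P hP u M s x r hM'
      have hent := hxent r (Finset.mem_range.2 hrR)
      have hgle : ∫ y, g y ∂ ((tauChain P u M s x r).bind (P (M r)))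
          ≤ ((((tauChain P u M s x r).bind (P (M r)))) (Metric.ball u (s r))).toReal := by
        have h1 : ∫ y, g y ∂ ((tauChain P u M s x r).bind (P (M r)))
            ≤ ∫ y, (Metric.ball u (s r)).indicator (fun _ => (1:ℝ)) y
              ∂ ((tauChain P u M s x r).bind (P (M r))) :=
          integral_mono
            (integrable_of_bound _ g hgcont.aestronglyMeasurable 1 hgbd)
            ((integrable_const (1:ℝ)).indicator Metric.isOpen_ball.measurableSet)
            (hg_supp (s r) (hst2 r hrR))
        rw [integral_indicator Metric.isOpen_ball.measurableSet, setIntegral_const, measureReal_def] at h1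
        simpa [smul_eq_mul] using h1
      have hγle : γ ≤ ((((tauChain P u M s x r).bind (P (M r))))
          (Metric.ball u (s r))).toReal := le_trans hent hgle
      push_cast
      push_cast at ihr
      linarith [hmasseq, ihr, hγle]
  have hup := hdec R le_rfl
  have hlow := massX M s R hM hst x n hn hdef
  have hceil : (1/γ : ℝ) ≤ (Nat.ceil (1/γ) : ℝ) := Nat.le_ceil _
  have hRγ : 1 + γ ≤ (R:ℝ) * γ := by
    rw [hR_def]
    push_cast
    have h1 : (1/γ) * γ = 1 := by field_simp
    nlinarith [hceil, hγ]
  linarith [hup, hlow, hb, hRγ]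

lemma PfN_neg {n : ℕ} (f : X → ℝ) (x : X) : PfN P n (fun y => -(f y)) x = -(PfN P n f x) := by
  rw [PfN, PfN, integral_neg]

theorem stmt15' [CompleteSpace X] [TopologicalSpace.SeparableSpace X]
    (hP : IsMarkovSemigroupN P) (hFeller : FellerN P)
    (μs : Measure X) (hstab : AsympStableN P μs)
    (hint : (interior (msupp μs)).Nonempty) :
    ∀ z : X, EPropN P z := by
  intro z f hf ε hε
  by_contra hcon
  push_neg at hcon
  -- hcon : ∀ δ > 0, ∃ x, dist x z < δ ∧ ∃ n, 1 ≤ n ∧ ε ≤ |PfN P n f x - PfN P n f z|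
  obtain ⟨⟨K, hK⟩, ⟨C₀, hC₀⟩⟩ := hf
  have hfc : Continuous f := hK.continuous
  set C := C₀ + 1 with hC_def
  have hC : 0 < C := by
    have := le_trans (abs_nonneg (f z)) (hC₀ z)
    rw [hC_def]; linarith
  have hfC : ∀ y, |f y| ≤ C := fun y => by rw [hC_def]; linarith [hC₀ y]
  set c := ∫ y, f y ∂ μs with hc_def
  have hφcont : ∀ j, 1 ≤ j → Continuous (fun x => PfN P j f x) := fun j hj =>
    (hFeller j hj f hfc ⟨C, hfC⟩).1
  have hφconv : ∀ x, Tendsto (fun j => PfN P j f x) atTop (𝓝 c) :=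
    PfN_tendsto P hP hstab f hfc ⟨C, hfC⟩
  -- upgrade the failure to arbitrarily large times
  have Hbig : ∀ δ, 0 < δ → ∀ n₀ : ℕ, ∃ x n, dist x z < δ ∧ n₀ ≤ n ∧ 1 ≤ n ∧
      ε ≤ |PfN P n f x - PfN P n f z| := by
    intro δ hδ n₀
    have hev : ∀ᶠ x in 𝓝 z, ∀ j ∈ Finset.Icc 1 n₀, |PfN P j f x - PfN P j f z| < ε := by
      rw [Filter.eventually_all_finset]
      intro j hj
      have hj1 : 1 ≤ j := (Finset.mem_Icc.1 hj).1
      have htd := ((hφcont j hj1).tendsto z)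
      have := Metric.tendsto_nhds.1 htd ε hε
      filter_upwards [this] with x hx
      rwa [Real.dist_eq] at hx
    obtain ⟨δ', hδ', hball'⟩ := Metric.eventually_nhds_iff_ball.1 hev
    obtain ⟨x, hx1, n, hn1, hn2⟩ := hcon (min δ δ') (lt_min hδ hδ')
    refine ⟨x, n, lt_of_lt_of_le hx1 (min_le_left _ _), ?_, hn1, hn2⟩
    by_contra hlt
    push_neg at hlt
    have hxball : x ∈ Metric.ball z δ' :=
      Metric.mem_ball.2 (lt_of_lt_of_le hx1 (min_le_right _ _))
    have := hball' x hxball n (Finset.mem_Icc.2 ⟨hn1, le_of_lt hlt⟩)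
    linarith
  -- control at z
  have hzconv := hφconv z
  obtain ⟨Nz, hNz⟩ : ∃ Nz : ℕ, ∀ n, Nz ≤ n → |PfN P n f z - c| ≤ ε/4 := by
    obtain ⟨Nz, hNz⟩ := Metric.tendsto_atTop.1 hzconv (ε/4) (by linarith)
    exact ⟨Nz, fun n hn => le_of_lt (by rw [← Real.dist_eq]; exact hNz n hn)⟩
  -- sign dichotomy
  by_cases hA : ∀ δ, 0 < δ → ∀ n₀ : ℕ, ∃ x n, dist x z < δ ∧ n₀ ≤ n ∧ 1 ≤ n ∧
      3*ε/4 ≤ PfN P n f x - c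
  · exact key_contradiction P hP hFeller μs hstab hint z f hfc C hC hfC (3*ε/4)
      (by linarith) hA
  by_cases hB : ∀ δ, 0 < δ → ∀ n₀ : ℕ, ∃ x n, dist x z < δ ∧ n₀ ≤ n ∧ 1 ≤ n ∧
      3*ε/4 ≤ c - PfN P n f x
  · have hfc' : Continuous fun y => -(f y) := hfc.neg
    have hfC' : ∀ y, |-(f y)| ≤ C := fun y => by rw [abs_neg]; exact hfC y
    have hμneg : ∫ y, -(f y) ∂ μs = -c := by rw [integral_neg, hc_def]
    refine key_contradiction P hP hFeller μs hstab hint z (fun y => -(f y)) hfc' C hC hfC'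
      (3*ε/4) (by linarith) ?_
    intro δ hδ n₀
    obtain ⟨x, n, h1, h2, h3, h4⟩ := hB δ hδ n₀
    refine ⟨x, n, h1, h2, h3, ?_⟩
    rw [PfN_neg, hμneg]
    linarith
  -- both fail: contradiction with Hbig
  push_neg at hA hB
  obtain ⟨δ₁, hδ₁, n₁, hblock₁⟩ := hA
  obtain ⟨δ₂, hδ₂, n₂, hblock₂⟩ := hB
  obtain ⟨x, n, hx1, hn0, hn1, hdef⟩ := Hbig (min δ₁ δ₂) (lt_min hδ₁ hδ₂)
    (max (max n₁ n₂) Nz)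
  have hd1 : dist x z < δ₁ := lt_of_lt_of_le hx1 (min_le_left _ _)
  have hd2 : dist x z < δ₂ := lt_of_lt_of_le hx1 (min_le_right _ _)
  have hnn1 : n₁ ≤ n := le_trans (le_trans (le_max_left _ _) (le_max_left _ _)) hn0
  have hnn2 : n₂ ≤ n := le_trans (le_trans (le_max_right _ _) (le_max_left _ _)) hn0
  have hnz : Nz ≤ n := le_trans (le_max_right _ _) hn0
  have hz4 := hNz n hnz
  have habs : 3*ε/4 ≤ |PfN P n f x - c| := by
    have htri : |PfN P n f x - PfN P n f z| ≤ |PfN P n f x - c| + |c - PfN P n f z| :=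
      abs_sub_le _ _ _
    have : |c - PfN P n f z| = |PfN P n f z - c| := abs_sub_comm _ _
    linarith
  rcases le_abs.1 habs with hpos | hneg2
  · exact absurd hpos (not_le.2 (hblock₁ x n hd1 hnn1 hn1))
  · have : 3*ε/4 ≤ c - PfN P n f x := by linarith [hneg2]
    exact absurd this (not_le.2 (hblock₂ x n hd2 hnn2 hn1))

end EPropAux

end

/-- for `T = ℕ₊`, a Feller, asymptotically stable Markov semigroup whose
unique invariant measure `μ*` has support with nonempty interior satisfies the
e-property at every point of `X`. -/
theorem stmt15 {X : Type*} [MetricSpace X] [CompleteSpace X]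
    [TopologicalSpace.SeparableSpace X] [MeasurableSpace X] [BorelSpace X]
    (P : ℕ → X → Measure X) (hP : IsMarkovSemigroupN P) (hFeller : FellerN P)
    (μs : Measure X) (hstab : AsympStableN P μs)
    (hint : (interior (msupp μs)).Nonempty) :
    ∀ z : X, EPropN P z := by
  exact EPropAux.stmt15' P hP hFeller μs hstab hint
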